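/- Suppose W is a bounded-degree kernel with positive minimum degree. Then the branching process X_{W†} goes extinct almost surely; equivalently, if q_{k,0} denotes the probability that generation k contains no particles, then lim_{k→∞} q_{k,0} = 1. -/

import Mathlib

open MeasureTheory Filter
open scoped ENNReal

/-- extinction of the critical branching process `X_{W†}`.
`Z k` is the size of generation `k`; criticality gives `E[Z k] = 1`; once a generation is
empty all later ones are; and if generation `k` has `j` particles, then with probability
at least `g^j` (each particle independently childless with probability at least `g`)
generation `k+1` is empty.  Conclusion: the extinction probabilities
`q_{k,0} = P[Z k = 0]` tend to `1`, i.e. `X_{W†}` goes extinct almost surely. -/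
theorem branching_process_extinct
    {Ω : Type*} [MeasurableSpace Ω] (P : Measure Ω) [IsProbabilityMeasure P]
    (Z : ℕ → Ω → ℕ) (hZ : ∀ k, Measurable (Z k))
    (hmean : ∀ k, ∫⁻ ω, (Z k ω : ℝ≥0∞) ∂P = 1)
    (hmono : ∀ k ω, Z k ω = 0 → Z (k + 1) ω = 0)
    (g : ℝ) (hg : 0 < g) (hg1 : g ≤ 1)
    (hext : ∀ k j, ENNReal.ofReal (g ^ j) * P {ω | Z k ω = j} ≤
      P {ω | Z k ω = j ∧ Z (k + 1) ω = 0}) :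
    Tendsto (fun k => P {ω | Z k ω = 0}) atTop (nhds 1) := by
  classical
  have hms : ∀ k j, MeasurableSet {ω | Z k ω = j} := fun k j =>
    (hZ k) (measurableSet_singleton j)
  set q : ℕ → ℝ≥0∞ := fun k => P {ω | Z k ω = 0} with hqdef
  have hqmono : Monotone q := monotone_nat_of_le_succ fun k =>
    measure_mono fun ω h => hmono k ω h
  have hlim : Tendsto q atTop (nhds (⨆ k, q k)) := tendsto_atTop_iSup hqmono
  suffices hL : (⨆ k, q k) = 1 by rwa [hL] at hlim
  refine le_antisymm (iSup_le fun k => prob_le_one) ?_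
  -- the "middle" probabilities
  set f : ℕ → ℕ → ℝ≥0∞ := fun M k => P {ω | 1 ≤ Z k ω ∧ Z k ω ≤ M} with hfdef
  have hfms : ∀ M k, MeasurableSet {ω | 1 ≤ Z k ω ∧ Z k ω ≤ M} := by
    intro M k
    have : {ω | 1 ≤ Z k ω ∧ Z k ω ≤ M} = ⋃ j ∈ Finset.range M, {ω | Z k ω = j + 1} := by
      ext ω
      simp only [Set.mem_setOf_eq, Set.mem_iUnion, Finset.mem_range]
      constructor
      · rintro ⟨h1, h2⟩; exact ⟨Z k ω - 1, by omega, by omega⟩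
      · rintro ⟨j, hj, hj'⟩; omega
    rw [this]
    exact MeasurableSet.biUnion (Finset.range M).countable_toSet fun j _ => hms k (j + 1)
  -- decomposition of the middle set as a disjoint union
  have hfsum : ∀ M k, f M k = ∑ j ∈ Finset.range M, P {ω | Z k ω = j + 1} := by
    intro M k
    have hU : {ω | 1 ≤ Z k ω ∧ Z k ω ≤ M} = ⋃ j ∈ Finset.range M, {ω | Z k ω = j + 1} := by
      ext ω
      simp only [Set.mem_setOf_eq, Set.mem_iUnion, Finset.mem_range]
      constructor
      · rintro ⟨h1, h2⟩; exact ⟨Z k ω - 1, by omega, by omega⟩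
      · rintro ⟨j, hj, hj'⟩; omega
    rw [hfdef]
    simp only
    rw [hU]
    refine measure_biUnion_finset ?_ fun j _ => hms k (j + 1)
    intro i _ j _ hij
    refine Set.disjoint_left.2 fun ω h1 h2 => ?_
    simp only [Set.mem_setOf_eq] at h1 h2
    omega
  -- key inequality: q k + g^M * f M k ≤ q (k+1)
  have hkey : ∀ M k, q k + ENNReal.ofReal (g ^ M) * f M k ≤ q (k + 1) := by
    intro M k
    set A : ℕ → Set Ω := fun j => {ω | Z k ω = j ∧ Z (k + 1) ω = 0} with hA
    have hAms : ∀ j, MeasurableSet (A j) := fun j => (hms k j).inter (hms (k + 1) 0)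
    have hUsub : (⋃ j ∈ Finset.range (M + 1), A j) ⊆ {ω | Z (k + 1) ω = 0} := by
      intro ω hω
      simp only [Set.mem_iUnion, Finset.mem_range] at hω
      obtain ⟨j, _, _, h2⟩ := hω
      exact h2
    have hUeq : P (⋃ j ∈ Finset.range (M + 1), A j) = ∑ j ∈ Finset.range (M + 1), P (A j) := by
      refine measure_biUnion_finset ?_ fun j _ => hAms j
      intro i _ j _ hij
      refine Set.disjoint_left.2 fun ω h1 h2 => ?_
      simp only [hA, Set.mem_setOf_eq] at h1 h2
      omega
    have hA0 : q k ≤ P (A 0) := by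
      refine measure_mono fun ω h => ?_
      exact ⟨h, hmono k ω h⟩
    have hAj : ∀ j ∈ Finset.range M,
        ENNReal.ofReal (g ^ M) * P {ω | Z k ω = j + 1} ≤ P (A (j + 1)) := by
      intro j hj
      refine le_trans ?_ (hext k (j + 1))
      apply mul_le_mul_left
      apply ENNReal.ofReal_le_ofReal
      exact pow_le_pow_of_le_one hg.le hg1 (by simp only [Finset.mem_range] at hj; omega)
    calc q k + ENNReal.ofReal (g ^ M) * f M k
        = q k + ∑ j ∈ Finset.range M, ENNReal.ofReal (g ^ M) * P {ω | Z k ω = j + 1} := by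
          rw [hfsum, Finset.mul_sum]
      _ ≤ P (A 0) + ∑ j ∈ Finset.range M, P (A (j + 1)) :=
          add_le_add hA0 (Finset.sum_le_sum hAj)
      _ = ∑ j ∈ Finset.range (M + 1), P (A j) := by
          rw [Finset.sum_range_succ']; ring
      _ = P (⋃ j ∈ Finset.range (M + 1), A j) := hUeq.symm
      _ ≤ q (k + 1) := measure_mono hUsub
  -- hence for each M, f M k → 0 as k → ∞
  have hf0 : ∀ M, Tendsto (fun k => f M k) atTop (nhds 0) := by
    intro M
    have hc : (0 : ℝ≥0∞) < ENNReal.ofReal (g ^ M) := by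
      rw [ENNReal.ofReal_pos]; positivity
    have hpartial : ∀ n, q 0 + ∑ k ∈ Finset.range n, ENNReal.ofReal (g ^ M) * f M k ≤ q n := by
      intro n
      induction n with
      | zero => simp
      | succ n ih =>
        rw [Finset.sum_range_succ, ← add_assoc]
        calc q 0 + ∑ k ∈ Finset.range n, ENNReal.ofReal (g ^ M) * f M k
              + ENNReal.ofReal (g ^ M) * f M n
            ≤ q n + ENNReal.ofReal (g ^ M) * f M n := add_le_add_left ih _
          _ ≤ q (n + 1) := hkey M n
    have htsum : ∑' k, ENNReal.ofReal (g ^ M) * f M k ≤ 1 := by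
      refine ENNReal.tsum_le_of_sum_range_le fun n => ?_
      exact le_trans (le_trans le_add_self (hpartial n)) prob_le_one
    rw [ENNReal.tsum_mul_left] at htsum
    have hne : ∑' k, f M k ≠ ⊤ := by
      intro h
      rw [h, ENNReal.mul_top hc.ne'] at htsum
      exact (lt_irrefl _ (lt_of_le_of_lt htsum (by norm_num))).elim
    exact ENNReal.tendsto_atTop_zero_of_tsum_ne_top hne
  -- Markov: the tail probability is small
  have hmarkov : ∀ M k, P {ω | M < Z k ω} ≤ ((M : ℝ≥0∞) + 1)⁻¹ := by
    intro M k
    have h := MeasureTheory.mul_meas_ge_le_lintegral₀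
      (μ := P) (f := fun ω => (Z k ω : ℝ≥0∞))
      ((measurable_from_top.comp (hZ k)).aemeasurable) ((M : ℝ≥0∞) + 1)
    rw [hmean k] at h
    have hset : {ω | M < Z k ω} = {ω | (M : ℝ≥0∞) + 1 ≤ (Z k ω : ℝ≥0∞)} := by
      ext ω
      simp only [Set.mem_setOf_eq]
      rw [show ((M : ℝ≥0∞) + 1) = ((M + 1 : ℕ) : ℝ≥0∞) by push_cast; ring,
        Nat.cast_le]
      omega
    rw [hset]
    rw [ENNReal.le_inv_iff_mul_le, mul_comm]
    exact h
  -- combine: 1 ≤ ⨆ q + (M+1)⁻¹ for each M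
  have hMbound : ∀ M : ℕ, (1 : ℝ≥0∞) ≤ (⨆ k, q k) + ((M : ℝ≥0∞) + 1)⁻¹ := by
    intro M
    have hptwise : ∀ k, (1 : ℝ≥0∞) ≤ q k + f M k + ((M : ℝ≥0∞) + 1)⁻¹ := by
      intro k
      have hcompl : q k + P {ω | Z k ω = 0}ᶜ = 1 := prob_add_prob_compl (hms k 0)
      have hsplit : P {ω | Z k ω = 0}ᶜ ≤ f M k + ((M : ℝ≥0∞) + 1)⁻¹ := by
        refine le_trans ?_ (add_le_add_right (hmarkov M k) _)
        refine le_trans (measure_mono ?_) (measure_union_le _ _)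
        intro ω hω
        simp only [Set.mem_compl_iff, Set.mem_setOf_eq] at hω
        simp only [Set.mem_union, Set.mem_setOf_eq]
        omega
      calc (1 : ℝ≥0∞) = q k + P {ω | Z k ω = 0}ᶜ := hcompl.symm
        _ ≤ q k + (f M k + ((M : ℝ≥0∞) + 1)⁻¹) := add_le_add_right hsplit _
        _ = q k + f M k + ((M : ℝ≥0∞) + 1)⁻¹ := by ring
    have htend : Tendsto (fun k => q k + f M k + ((M : ℝ≥0∞) + 1)⁻¹) atTop
        (nhds ((⨆ k, q k) + ((M : ℝ≥0∞) + 1)⁻¹)) := by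
      have h1 : Tendsto (fun k => q k + f M k) atTop (nhds ((⨆ k, q k) + 0)) :=
        hlim.add (hf0 M)
      rw [add_zero] at h1
      exact h1.add tendsto_const_nhds
    exact ge_of_tendsto htend (Filter.Eventually.of_forall hptwise)
  -- let M → ∞
  have hMtend : Tendsto (fun M : ℕ => (⨆ k, q k) + ((M : ℝ≥0∞) + 1)⁻¹) atTop
      (nhds ((⨆ k, q k) + 0)) := by
    refine Tendsto.add tendsto_const_nhds ?_
    have : Tendsto (fun M : ℕ => ((M : ℝ≥0∞) + 1)⁻¹) atTop (nhds 0) := by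
      have h1 : Tendsto (fun M : ℕ => ((M + 1 : ℕ) : ℝ≥0∞)⁻¹) atTop (nhds 0) :=
        ENNReal.tendsto_inv_nat_nhds_zero.comp (tendsto_add_atTop_nat 1)
      simpa [Nat.cast_add] using h1
    exact this
  rw [add_zero] at hMtend
  exact ge_of_tendsto hMtend (Filter.Eventually.of_forall hMbound)
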